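/- If a(x), b(x), c(x) ∈ ℂ[x] are coprime, not all constant, and a + b + c = 0, where a = ∏_j T_{0j}^{l_{0j}}, b = ∏_j T_{1j}^{l_{1j}}, c = ∏_j T_{2j}^{l_{2j}} with m_{ij} distinct roots of T_{ij}, then Σ_{i,j} l_{ij} m_{ij} ≤ 3(Σ_{i,j} m_{ij}) - 3. In particular min_i (min_j l_{ij}) ≤ 2. -/

import Mathlib

open Polynomial

open UniqueFactorizationMonoid in
private lemma rad_natDegree_le (p : ℂ[X]) (hp : p ≠ 0) :
    (radical p).natDegree ≤ p.roots.toFinset.card := by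
  have hmem : ∀ q ∈ primeFactors p, q ∈ normalizedFactors p := by
    intro q hq
    exact (@Multiset.mem_toFinset ℂ[X] (fun a b => Classical.propDecidable (a = b)) q
      (normalizedFactors p)).mp hq
  have hdeg1 : ∀ q ∈ primeFactors p, q.natDegree = 1 := by
    intro q hq
    have hirr : Irreducible q := irreducible_of_normalized_factor q (hmem q hq)
    have := IsAlgClosed.degree_eq_one_of_irreducible ℂ hirr
    exact natDegree_eq_of_degree_eq_some this
  have hmono : ∀ q ∈ primeFactors p, q.Monic := by
    intro q hq
    have hq0 : q ≠ 0 := (prime_of_normalized_factor q (hmem q hq)).ne_zero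
    have := normalize_normalized_factor q (hmem q hq)
    rw [← this]
    exact monic_normalize hq0
  have heq : ∀ q ∈ primeFactors p, q = X + C (q.coeff 0) :=
    fun q hq => (hmono q hq).eq_X_add_C (hdeg1 q hq)
  have h1 : (radical p).natDegree = (primeFactors p).card := by
    have hid : radical p = ∏ q ∈ primeFactors p, q := rfl
    rw [hid, Polynomial.natDegree_prod _ _
      (fun q hq => (prime_of_normalized_factor q (hmem q hq)).ne_zero),
      Finset.card_eq_sum_ones]
    exact Finset.sum_congr rfl (fun q hq => hdeg1 q hq)
  rw [h1]
  apply Finset.card_le_card_of_injOn (fun q => -(q.coeff 0))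
  · intro q hq
    have hroot : q.IsRoot (-(q.coeff 0)) := by
      conv_lhs => rw [heq q hq]
      simp [IsRoot]
    have hdvd : q ∣ p := dvd_of_mem_normalizedFactors (hmem q hq)
    rw [Finset.mem_coe, Multiset.mem_toFinset, mem_roots hp]
    exact hroot.dvd hdvd
  · intro q1 h1' q2 h2' hval
    have : q1.coeff 0 = q2.coeff 0 := by
      have := neg_injective hval
      exact this
    rw [heq q1 h1', heq q2 h2', this]

theorem type2_abc_inequality (n0 n1 n2 : ℕ) (hn0 : 0 < n0) (hn1 : 0 < n1) (hn2 : 0 < n2)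
    (l0 : Fin n0 → ℕ) (l1 : Fin n1 → ℕ) (l2 : Fin n2 → ℕ)
    (hl0 : ∀ j, 0 < l0 j) (hl1 : ∀ j, 0 < l1 j) (hl2 : ∀ j, 0 < l2 j)
    (T0 : Fin n0 → ℂ[X]) (T1 : Fin n1 → ℂ[X]) (T2 : Fin n2 → ℂ[X])
    (a b c : ℂ[X])
    (ha : a = ∏ j, T0 j ^ l0 j) (hb : b = ∏ j, T1 j ^ l1 j) (hc : c = ∏ j, T2 j ^ l2 j)
    (hcop : ∀ d : ℂ[X], d ∣ a → d ∣ b → d ∣ c → IsUnit d)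
    (hnc : ¬ (a.natDegree = 0 ∧ b.natDegree = 0 ∧ c.natDegree = 0))
    (habc : a + b + c = 0) :
    ((∑ j, (l0 j : ℤ) * ((T0 j).roots.toFinset.card : ℤ))
      + (∑ j, (l1 j : ℤ) * ((T1 j).roots.toFinset.card : ℤ))
      + (∑ j, (l2 j : ℤ) * ((T2 j).roots.toFinset.card : ℤ))
      ≤ 3 * ((∑ j, ((T0 j).roots.toFinset.card : ℤ))
            + (∑ j, ((T1 j).roots.toFinset.card : ℤ))
            + (∑ j, ((T2 j).roots.toFinset.card : ℤ))) - 3)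
    ∧ ((∃ j, l0 j ≤ 2) ∨ (∃ j, l1 j ≤ 2) ∨ (∃ j, l2 j ≤ 2)) := by
  -- nonzeroness
  have ha0 : a ≠ 0 := by
    intro h
    apply hnc
    have hcb : c = -b := by linear_combination habc - h
    have hub : IsUnit b := hcop b (h ▸ dvd_zero b) dvd_rfl (hcb ▸ (dvd_neg.mpr dvd_rfl))
    refine ⟨by rw [h]; simp, natDegree_eq_zero_of_isUnit hub, ?_⟩
    rw [hcb, natDegree_neg]
    exact natDegree_eq_zero_of_isUnit hub
  have hb0 : b ≠ 0 := by
    intro h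
    apply hnc
    have hca : c = -a := by linear_combination habc - h
    have hua : IsUnit a := hcop a dvd_rfl (h ▸ dvd_zero a) (hca ▸ (dvd_neg.mpr dvd_rfl))
    refine ⟨natDegree_eq_zero_of_isUnit hua, by rw [h]; simp, ?_⟩
    rw [hca, natDegree_neg]
    exact natDegree_eq_zero_of_isUnit hua
  have hc0 : c ≠ 0 := by
    intro h
    apply hnc
    have hba : b = -a := by linear_combination habc - h
    have hua : IsUnit a := hcop a dvd_rfl (hba ▸ (dvd_neg.mpr dvd_rfl)) (h ▸ dvd_zero a)
    refine ⟨natDegree_eq_zero_of_isUnit hua, ?_, by rw [h]; simp⟩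
    rw [hba, natDegree_neg]
    exact natDegree_eq_zero_of_isUnit hua
  -- pairwise coprimality
  have hab : IsCoprime a b := by
    rw [← EuclideanDomain.gcd_isUnit_iff]
    refine hcop _ (EuclideanDomain.gcd_dvd_left a b) (EuclideanDomain.gcd_dvd_right a b) ?_
    have hcab : c = -(a + b) := by linear_combination habc
    rw [hcab]
    exact dvd_neg.mpr (dvd_add (EuclideanDomain.gcd_dvd_left a b)
      (EuclideanDomain.gcd_dvd_right a b))
  have hbc : IsCoprime b c := by
    rw [← EuclideanDomain.gcd_isUnit_iff]
    have haeq : a = -(b + c) := by linear_combination habc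
    refine hcop _ ?_ (EuclideanDomain.gcd_dvd_left b c) (EuclideanDomain.gcd_dvd_right b c)
    rw [haeq]
    exact dvd_neg.mpr (dvd_add (EuclideanDomain.gcd_dvd_left b c)
      (EuclideanDomain.gcd_dvd_right b c))
  have hca : IsCoprime c a := by
    rw [← EuclideanDomain.gcd_isUnit_iff]
    have hbeq : b = -(c + a) := by linear_combination habc
    refine hcop _ (EuclideanDomain.gcd_dvd_right c a) ?_ (EuclideanDomain.gcd_dvd_left c a)
    rw [hbeq]
    exact dvd_neg.mpr (dvd_add (EuclideanDomain.gcd_dvd_left c a)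
      (EuclideanDomain.gcd_dvd_right c a))
  -- Mason--Stothers
  have mason := Polynomial.abc ha0 hb0 hc0 hab habc
  -- the derivative case contradicts hnc
  rcases mason with ⟨hma, hmb, hmc⟩ | ⟨da, db, dc⟩
  swap
  · exact absurd ⟨natDegree_eq_zero_of_derivative_eq_zero da,
      natDegree_eq_zero_of_derivative_eq_zero db,
      natDegree_eq_zero_of_derivative_eq_zero dc⟩ hnc
  -- T's are nonzero
  have hT0 : ∀ j, T0 j ≠ 0 := by
    intro j hj
    apply ha0
    rw [ha]
    exact Finset.prod_eq_zero (Finset.mem_univ j) (by rw [hj]; exact zero_pow (hl0 j).ne')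
  have hT1 : ∀ j, T1 j ≠ 0 := by
    intro j hj
    apply hb0
    rw [hb]
    exact Finset.prod_eq_zero (Finset.mem_univ j) (by rw [hj]; exact zero_pow (hl1 j).ne')
  have hT2 : ∀ j, T2 j ≠ 0 := by
    intro j hj
    apply hc0
    rw [hc]
    exact Finset.prod_eq_zero (Finset.mem_univ j) (by rw [hj]; exact zero_pow (hl2 j).ne')
  -- degree lower bounds
  have hdegA : ∑ j, l0 j * (T0 j).roots.toFinset.card ≤ a.natDegree := by
    rw [ha, Polynomial.natDegree_prod _ _ (fun j _ => pow_ne_zero _ (hT0 j))]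
    refine Finset.sum_le_sum (fun j _ => ?_)
    rw [natDegree_pow]
    exact Nat.mul_le_mul_left _ ((Multiset.toFinset_card_le _).trans (card_roots' _))
  have hdegB : ∑ j, l1 j * (T1 j).roots.toFinset.card ≤ b.natDegree := by
    rw [hb, Polynomial.natDegree_prod _ _ (fun j _ => pow_ne_zero _ (hT1 j))]
    refine Finset.sum_le_sum (fun j _ => ?_)
    rw [natDegree_pow]
    exact Nat.mul_le_mul_left _ ((Multiset.toFinset_card_le _).trans (card_roots' _))
  have hdegC : ∑ j, l2 j * (T2 j).roots.toFinset.card ≤ c.natDegree := by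
    rw [hc, Polynomial.natDegree_prod _ _ (fun j _ => pow_ne_zero _ (hT2 j))]
    refine Finset.sum_le_sum (fun j _ => ?_)
    rw [natDegree_pow]
    exact Nat.mul_le_mul_left _ ((Multiset.toFinset_card_le _).trans (card_roots' _))
  -- root count upper bounds
  have hrootsA : a.roots.toFinset.card ≤ ∑ j, (T0 j).roots.toFinset.card := by
    have hsub : a.roots.toFinset ⊆ Finset.univ.biUnion (fun j => (T0 j).roots.toFinset) := by
      intro r hr
      rw [Multiset.mem_toFinset, mem_roots ha0, IsRoot, ha, eval_prod] at hr
      obtain ⟨j, -, hj⟩ := Finset.prod_eq_zero_iff.mp hr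
      rw [eval_pow, pow_eq_zero_iff (hl0 j).ne'] at hj
      exact Finset.mem_biUnion.mpr ⟨j, Finset.mem_univ j,
        Multiset.mem_toFinset.mpr ((mem_roots (hT0 j)).mpr hj)⟩
    exact (Finset.card_le_card hsub).trans (Finset.card_biUnion_le)
  have hrootsB : b.roots.toFinset.card ≤ ∑ j, (T1 j).roots.toFinset.card := by
    have hsub : b.roots.toFinset ⊆ Finset.univ.biUnion (fun j => (T1 j).roots.toFinset) := by
      intro r hr
      rw [Multiset.mem_toFinset, mem_roots hb0, IsRoot, hb, eval_prod] at hr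
      obtain ⟨j, -, hj⟩ := Finset.prod_eq_zero_iff.mp hr
      rw [eval_pow, pow_eq_zero_iff (hl1 j).ne'] at hj
      exact Finset.mem_biUnion.mpr ⟨j, Finset.mem_univ j,
        Multiset.mem_toFinset.mpr ((mem_roots (hT1 j)).mpr hj)⟩
    exact (Finset.card_le_card hsub).trans (Finset.card_biUnion_le)
  have hrootsC : c.roots.toFinset.card ≤ ∑ j, (T2 j).roots.toFinset.card := by
    have hsub : c.roots.toFinset ⊆ Finset.univ.biUnion (fun j => (T2 j).roots.toFinset) := by
      intro r hr
      rw [Multiset.mem_toFinset, mem_roots hc0, IsRoot, hc, eval_prod] at hr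
      obtain ⟨j, -, hj⟩ := Finset.prod_eq_zero_iff.mp hr
      rw [eval_pow, pow_eq_zero_iff (hl2 j).ne'] at hj
      exact Finset.mem_biUnion.mpr ⟨j, Finset.mem_univ j,
        Multiset.mem_toFinset.mpr ((mem_roots (hT2 j)).mpr hj)⟩
    exact (Finset.card_le_card hsub).trans (Finset.card_biUnion_le)
  -- radical degree bound
  have habc0 : a * b * c ≠ 0 := mul_ne_zero (mul_ne_zero ha0 hb0) hc0
  have hrad : (UniqueFactorizationMonoid.radical (a * b * c)).natDegree ≤
      a.roots.toFinset.card + b.roots.toFinset.card + c.roots.toFinset.card := by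
    refine (rad_natDegree_le _ habc0).trans ?_
    rw [roots_mul habc0, roots_mul (mul_ne_zero ha0 hb0), Multiset.toFinset_add,
      Multiset.toFinset_add]
    exact (Finset.card_union_le _ _).trans
      (Nat.add_le_add_right (Finset.card_union_le _ _) _)
  -- assemble the natural-number inequality
  have hnat : (∑ j, l0 j * (T0 j).roots.toFinset.card)
      + (∑ j, l1 j * (T1 j).roots.toFinset.card)
      + (∑ j, l2 j * (T2 j).roots.toFinset.card) + 3
      ≤ 3 * ((∑ j, (T0 j).roots.toFinset.card) + (∑ j, (T1 j).roots.toFinset.card)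
          + (∑ j, (T2 j).roots.toFinset.card)) := by
    omega
  have e0 : (∑ j, (l0 j : ℤ) * ((T0 j).roots.toFinset.card : ℤ))
      = ((∑ j, l0 j * (T0 j).roots.toFinset.card : ℕ) : ℤ) := by push_cast; rfl
  have e1 : (∑ j, (l1 j : ℤ) * ((T1 j).roots.toFinset.card : ℤ))
      = ((∑ j, l1 j * (T1 j).roots.toFinset.card : ℕ) : ℤ) := by push_cast; rfl
  have e2 : (∑ j, (l2 j : ℤ) * ((T2 j).roots.toFinset.card : ℤ))
      = ((∑ j, l2 j * (T2 j).roots.toFinset.card : ℕ) : ℤ) := by push_cast; rfl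
  have f0 : (∑ j, ((T0 j).roots.toFinset.card : ℤ))
      = ((∑ j, (T0 j).roots.toFinset.card : ℕ) : ℤ) := by push_cast; rfl
  have f1 : (∑ j, ((T1 j).roots.toFinset.card : ℤ))
      = ((∑ j, (T1 j).roots.toFinset.card : ℕ) : ℤ) := by push_cast; rfl
  have f2 : (∑ j, ((T2 j).roots.toFinset.card : ℤ))
      = ((∑ j, (T2 j).roots.toFinset.card : ℕ) : ℤ) := by push_cast; rfl
  constructor
  · rw [e0, e1, e2, f0, f1, f2]
    omega
  · by_contra hcon
    push_neg at hcon
    obtain ⟨h0, h1, h2⟩ := hcon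
    have g0 : 3 * (∑ j, (T0 j).roots.toFinset.card) ≤ ∑ j, l0 j * (T0 j).roots.toFinset.card := by
      rw [Finset.mul_sum]
      exact Finset.sum_le_sum (fun j _ => Nat.mul_le_mul_right _ (h0 j))
    have g1 : 3 * (∑ j, (T1 j).roots.toFinset.card) ≤ ∑ j, l1 j * (T1 j).roots.toFinset.card := by
      rw [Finset.mul_sum]
      exact Finset.sum_le_sum (fun j _ => Nat.mul_le_mul_right _ (h1 j))
    have g2 : 3 * (∑ j, (T2 j).roots.toFinset.card) ≤ ∑ j, l2 j * (T2 j).roots.toFinset.card := by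
      rw [Finset.mul_sum]
      exact Finset.sum_le_sum (fun j _ => Nat.mul_le_mul_right _ (h2 j))
    omega
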